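/- Let q be a prime power, d ≥ 2, and α ∈ F_{q^d}^× such that α^{q^i − 1} ∉ F_q^× for all 0 < i < d. Then F_q(α) = F_{q^d}, and the d(q−1) elements α^{q^j}·γ^i for 0 ≤ j < d, 0 ≤ i < q−1 (where γ generates F_q^×) are pairwise distinct. -/

import Mathlib

/-- let `K = F_{q^d}` over `F = F_q` with `d ≥ 2`, and let `α ∈ K^×` be
such that `α^{q^i − 1} ∉ F_q^×` for all `0 < i < d`. Then `F_q(α) = F_{q^d}`, and
(for `γ` a generator of `F_q^×`) the `d(q−1)` elements `α^{q^j}·γ^i` for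
`0 ≤ j < d`, `0 ≤ i < q−1` are pairwise distinct. -/
theorem good_element_properties {F K : Type*} [Field F] [Fintype F] [Field K] [Fintype K]
    [Algebra F K] {q d : ℕ}
    (hq : Fintype.card F = q) (hK : Fintype.card K = q ^ d) (hd : 2 ≤ d)
    (γ : Fˣ) (hγ : ∀ x : Fˣ, x ∈ Subgroup.zpowers γ)
    (α : K) (hα : α ≠ 0)
    (hgood : ∀ i : ℕ, 0 < i → i < d → ∀ δ : F, α ^ (q ^ i - 1) ≠ algebraMap F K δ) :
    Algebra.adjoin F {α} = ⊤ ∧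
    Function.Injective (fun p : Fin d × Fin (q - 1) =>
      α ^ q ^ (p.1 : ℕ) * algebraMap F K ((γ : F) ^ (p.2 : ℕ))) := by
  have hq1 : 1 < q := hq ▸ Fintype.one_lt_card
  haveI : FiniteDimensional F K := Module.Finite.of_finite
  have hrank : Module.finrank F K = d := by
    have := Module.card_eq_pow_finrank (K := F) (V := K)
    rw [hq, hK] at this
    exact (Nat.pow_right_injective hq1 this.symm)
  have key : ∀ j1 j2 : ℕ, j1 ≤ j2 → j2 < d →
      ∀ c1 c2 : F, c2 ≠ 0 → α ^ q ^ j1 * algebraMap F K c1 = α ^ q ^ j2 * algebraMap F K c2 →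
      j1 = j2 := by
    intro j1 j2 hle hlt c1 c2 hc2 heq
    by_contra hne
    have hjlt : j1 < j2 := lt_of_le_of_ne hle hne
    have hqle : q ^ j1 ≤ q ^ j2 := Nat.pow_le_pow_right (by omega) hle
    have hsplit : α ^ q ^ j2 = α ^ q ^ j1 * α ^ (q ^ j2 - q ^ j1) := by
      rw [← pow_add]; congr 1; omega
    rw [hsplit, mul_assoc] at heq
    have hαpow : α ^ q ^ j1 ≠ 0 := pow_ne_zero _ hα
    have heq2 : algebraMap F K c1 = α ^ (q ^ j2 - q ^ j1) * algebraMap F K c2 :=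
      mul_left_cancel₀ hαpow heq
    -- so α ^ (q^j2 - q^j1) = algebraMap (c1 / c2)
    have hc2K : algebraMap F K c2 ≠ 0 := fun h =>
      hc2 ((algebraMap F K).injective (h.trans (map_zero _).symm))
    have heq3 : α ^ (q ^ j2 - q ^ j1) = algebraMap F K (c1 / c2) := by
      rw [map_div₀, eq_div_iff hc2K]
      exact heq2.symm
    have hexp : q ^ j2 - q ^ j1 = (q ^ (j2 - j1) - 1) * q ^ j1 := by
      have h1 : q ^ (j2 - j1) * q ^ j1 = q ^ j2 := by
        rw [← pow_add]; congr 1; omega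
      have h2 : 1 ≤ q ^ (j2 - j1) := Nat.one_le_pow _ _ (by omega)
      rw [Nat.sub_mul, h1, one_mul]
    set β := α ^ (q ^ (j2 - j1) - 1) with hβ
    have hβq : β ^ q ^ j1 = algebraMap F K (c1 / c2) := by
      rw [hβ, ← pow_mul, ← hexp, heq3]
    have hmul : q ^ j1 * q ^ (d - j1) = q ^ d := by rw [← pow_add]; congr 1; omega
    have hfull : β ^ q ^ d = β := by rw [← hK]; exact FiniteField.pow_card β
    have hβfull : β = algebraMap F K ((c1 / c2) ^ q ^ (d - j1)) := by
      rw [map_pow, ← hβq, ← pow_mul, hmul, hfull]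
    exact hgood (j2 - j1) (by omega) (by omega) _ hβfull
  refine ⟨?_, ?_⟩
  · by_contra hne
    set E := Algebra.adjoin F {α} with hE
    haveI : Fintype E := Fintype.ofFinite E
    letI : Field E := (Finite.isField_of_domain E).toField
    have hcard : Fintype.card E = q ^ Module.finrank F E := by
      rw [← hq]; exact Module.card_eq_pow_finrank
    have hmem : α ∈ E := Algebra.self_mem_adjoin_singleton F α
    have helt : Module.finrank F E < d := by
      rw [← hrank, ← Subalgebra.finrank_toSubmodule]
      exact Submodule.finrank_lt (
        (fun h => hne (Algebra.toSubmodule_eq_top.mp h)))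
    have he0 : 0 < Module.finrank F E := Module.finrank_pos
    have hpow : α ^ q ^ Module.finrank F E = α := by
      have h1 := FiniteField.pow_card (⟨α, hmem⟩ : E)
      rw [hcard] at h1
      have := congrArg (Subtype.val) h1
      rwa [SubmonoidClass.coe_pow] at this
    have h1 : α ^ (q ^ Module.finrank F E - 1) = 1 := by
      have hge : 1 ≤ q ^ Module.finrank F E := Nat.one_le_pow _ _ (by omega)
      have : α ^ (q ^ Module.finrank F E - 1) * α = 1 * α := by
        rw [one_mul, ← pow_succ, Nat.sub_add_cancel hge, hpow]
      exact mul_right_cancel₀ hα this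
    exact hgood _ he0 helt 1 (by rw [map_one]; exact h1)
  · rintro ⟨j1, i1⟩ ⟨j2, i2⟩ h
    simp only at h
    have hγne : ∀ i : ℕ, ((γ : F) ^ i) ≠ 0 := fun i => pow_ne_zero _ (Units.ne_zero γ)
    have hj : (j1 : ℕ) = j2 := by
      rcases le_total (j1 : ℕ) (j2 : ℕ) with hle | hle
      · exact key _ _ hle j2.isLt _ _ (hγne _) h
      · exact (key _ _ hle j1.isLt _ _ (hγne _) h.symm).symm
    rw [hj] at h
    have h2 : ((γ : F)) ^ (i1 : ℕ) = (γ : F) ^ (i2 : ℕ) :=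
      (algebraMap F K).injective (mul_left_cancel₀ (pow_ne_zero _ hα) h)
    have h4 : γ ^ (i1 : ℕ) = γ ^ (i2 : ℕ) := Units.ext (by push_cast; exact h2)
    haveI : DecidableEq F := Classical.decEq F
    have horder : orderOf γ = q - 1 := by
      rw [orderOf_eq_card_of_forall_mem_zpowers hγ, Nat.card_eq_fintype_card,
        Fintype.card_units, hq]
    have h5 := pow_eq_pow_iff_modEq.mp h4
    rw [horder] at h5
    have hi : (i1 : ℕ) = i2 := by
      have := i1.isLt
      have := i2.isLt
      unfold Nat.ModEq at h5
      rwa [Nat.mod_eq_of_lt i1.isLt, Nat.mod_eq_of_lt i2.isLt] at h5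
    exact Prod.ext (Fin.ext hj) (Fin.ext hi)
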